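/- Let s > 0, ε > 0, d ≥ 1, and let Λ ⊆ ℝ^{2d} be a lattice. Suppose a sequence a : Λ → ℂ satisfies |a(λ)| ≤ C·exp(−ε|λ|^{1/s}) for all λ ∈ Λ, with some C > 0. If |a|_n denotes the n-th largest value among the |a(λ)| (a nonincreasing rearrangement), then there exist constants C' > 0 and ε' > 0 such that |a|_n ≤ C'·exp(−ε' n^{1/(2ds)}) for all n ≥ 1. -/

import Mathlib

/-- The point `A m` of the lattice `A ℤ^n ⊆ ℝ^n`, viewed in Euclidean space. -/
noncomputable def latticePoint {n : ℕ} (A : Matrix (Fin n) (Fin n) ℝ) (m : Fin n → ℤ) :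
    EuclideanSpace ℝ (Fin n) :=
  (WithLp.equiv 2 (Fin n → ℝ)).symm (A.mulVec fun i => (m i : ℝ))

private lemma coord_abs_le_norm {k : ℕ} (x : EuclideanSpace ℝ (Fin k)) (i : Fin k) :
    |x i| ≤ ‖x‖ := by
  rw [EuclideanSpace.norm_eq, ← Real.sqrt_sq_eq_abs]
  apply Real.sqrt_le_sqrt
  have := Finset.single_le_sum (f := fun j => ‖x j‖ ^ 2) (fun j _ => by positivity)
    (Finset.mem_univ i)
  simpa [Real.norm_eq_abs, sq_abs] using this

set_option maxHeartbeats 1000000 in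
theorem exp_sparsity_of_rearrangement (d : ℕ) (hd : 1 ≤ d)
    (A : Matrix (Fin (2 * d)) (Fin (2 * d)) ℝ) (hA : IsUnit A.det)
    (s ε C : ℝ) (hs : 0 < s) (hε : 0 < ε) (hC : 0 < C)
    (a : (Fin (2 * d) → ℤ) → ℂ)
    (hb : ∀ m : Fin (2 * d) → ℤ, ‖a m‖ ≤ C * Real.exp (-ε * ‖latticePoint A m‖ ^ (1 / s)))
    (e : ℕ ≃ (Fin (2 * d) → ℤ)) (he : Antitone fun n : ℕ => ‖a (e n)‖) :
    ∃ C' > 0, ∃ ε' > 0, ∀ n : ℕ, 1 ≤ n →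
      ‖a (e (n - 1))‖ ≤ C' * Real.exp (-ε' * (n : ℝ) ^ (1 / (2 * (d : ℝ) * s))) := by
  have hd2 : (0:ℝ) < 2 * (d:ℝ) := by
    have : (1:ℝ) ≤ (d:ℝ) := by exact_mod_cast hd
    linarith
  -- inverse matrix bound
  obtain ⟨c, hc0, hcb⟩ : ∃ c : ℝ, 0 ≤ c ∧ ∀ m : Fin (2*d) → ℤ,
      ‖((WithLp.equiv 2 (Fin (2*d) → ℝ)).symm (fun i => (m i : ℝ)) :
        EuclideanSpace ℝ (Fin (2*d)))‖ ≤ c * ‖latticePoint A m‖ := by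
    refine ⟨‖LinearMap.toContinuousLinearMap (Matrix.toEuclideanLin A⁻¹)‖, norm_nonneg _,
      fun m => ?_⟩
    have key : Matrix.toEuclideanLin A⁻¹ (latticePoint A m)
        = (WithLp.equiv 2 (Fin (2*d) → ℝ)).symm (fun i => (m i : ℝ)) := by
      simp [latticePoint, Matrix.toEuclideanLin_apply, Matrix.mulVec_mulVec,
        Matrix.nonsing_inv_mul A hA]
    calc ‖((WithLp.equiv 2 (Fin (2*d) → ℝ)).symm (fun i => (m i : ℝ)) :
          EuclideanSpace ℝ (Fin (2*d)))‖
        = ‖(LinearMap.toContinuousLinearMap (Matrix.toEuclideanLin A⁻¹)) (latticePoint A m)‖ := by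
          rw [LinearMap.coe_toContinuousLinearMap', key]
      _ ≤ _ := (LinearMap.toContinuousLinearMap (Matrix.toEuclideanLin A⁻¹)).le_opNorm _
  set K : ℝ := 2 * c + 3 with hK
  have hK0 : 0 < K := by positivity
  set u : ℝ := 1 / (2 * (d:ℝ) * s) with hu
  set v : ℝ := 1 / (2 * (d:ℝ)) with hv
  have huv : u = v * (1/s) := by
    rw [hu, hv]; field_simp
  set ε' : ℝ := ε / (2*K) ^ (1/s : ℝ) with hε'
  have hε'0 : 0 < ε' := by
    apply div_pos hε
    apply Real.rpow_pos_of_pos; linarith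
  set C' : ℝ := C * Real.exp (ε' * (2*K) ^ (1/s : ℝ)) with hC'
  have hC'0 : 0 < C' := by positivity
  have hCC' : C ≤ C' := by
    rw [hC']
    nlinarith [Real.one_le_exp (by positivity : (0:ℝ) ≤ ε' * (2*K) ^ (1/s : ℝ))]
  refine ⟨C', hC'0, ε', hε'0, fun n hn => ?_⟩
  set x : ℝ := ‖a (e (n-1))‖ with hx
  rcases (norm_nonneg (a (e (n-1)))).eq_or_lt' with h0 | hx0
  · rw [hx, h0]; positivity
  rw [← hx] at hx0
  -- x ≤ C
  have hxC : x ≤ C := by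
    refine (hb (e (n-1))).trans ?_
    nlinarith [Real.exp_le_one_iff.mpr (by
      have : (0:ℝ) ≤ ‖latticePoint A (e (n-1))‖ ^ (1/s : ℝ) :=
        Real.rpow_nonneg (norm_nonneg _) _
      nlinarith : -ε * ‖latticePoint A (e (n-1))‖ ^ (1/s : ℝ) ≤ 0)]
  set T : ℝ := Real.log (C / x) / ε with hT
  have hT0 : 0 ≤ T := by
    apply div_nonneg _ hε.le
    apply Real.log_nonneg
    rw [le_div_iff₀ hx0]; linarith
  set R : ℝ := T ^ (s : ℝ) with hR
  have hR0 : 0 ≤ R := Real.rpow_nonneg hT0 _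
  -- all points e k, k < n, lie in the ball of radius R
  have hball : ∀ k, k < n → ‖latticePoint A (e k)‖ ≤ R := by
    intro k hk
    have hxk : x ≤ ‖a (e k)‖ := he (Nat.le_sub_one_of_lt hk)
    have h1 : x ≤ C * Real.exp (-ε * ‖latticePoint A (e k)‖ ^ (1/s : ℝ)) :=
      hxk.trans (hb (e k))
    have h2 : ‖latticePoint A (e k)‖ ^ (1/s : ℝ) ≤ T := by
      rw [hT, le_div_iff₀ hε]
      have h3 : x / C ≤ Real.exp (-ε * ‖latticePoint A (e k)‖ ^ (1/s : ℝ)) := by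
        rw [div_le_iff₀ hC]; linarith [h1]
      have h4 : Real.log (x / C) ≤ -ε * ‖latticePoint A (e k)‖ ^ (1/s : ℝ) :=
        (Real.log_le_iff_le_exp (by positivity)).mpr h3
      have h5 : Real.log (C / x) = - Real.log (x / C) := by
        rw [Real.log_div hC.ne' hx0.ne', Real.log_div hx0.ne' hC.ne']; ring
      rw [h5]; nlinarith
    calc ‖latticePoint A (e k)‖
        = (‖latticePoint A (e k)‖ ^ (1/s : ℝ)) ^ (s : ℝ) := by
          rw [← Real.rpow_mul (norm_nonneg _), one_div_mul_cancel hs.ne', Real.rpow_one]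
      _ ≤ T ^ (s : ℝ) := Real.rpow_le_rpow (Real.rpow_nonneg (norm_nonneg _) _) h2 hs.le
      _ = R := rfl
  -- counting lattice points
  set M : ℕ := ⌈c * R⌉₊ with hM
  have hcount : (n : ℝ) ≤ ((2*M+1 : ℕ) : ℝ) ^ (2*d) := by
    have hsub : ∀ j ∈ Finset.range n,
        e j ∈ Finset.Icc (fun _ : Fin (2*d) => -(M:ℤ)) (fun _ => (M:ℤ)) := by
      intro j hj
      rw [Finset.mem_range] at hj
      rw [Finset.mem_Icc]
      have habs : ∀ i, |(e j i : ℝ)| ≤ (M : ℝ) := by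
        intro i
        have h1 : |(e j i : ℝ)| ≤ c * R := by
          have := (coord_abs_le_norm ((WithLp.equiv 2 (Fin (2*d) → ℝ)).symm
            (fun i => ((e j) i : ℝ))) i).trans ((hcb (e j)).trans
            (mul_le_mul_of_nonneg_left (hball j hj) hc0))
          simpa using this
        exact h1.trans (Nat.le_ceil _)
      constructor <;> intro i <;> have := habs i <;> rw [abs_le] at this
      · exact_mod_cast this.1
      · exact_mod_cast this.2
    have hinj : Set.InjOn (fun j => e j) (Finset.range n) := fun a _ b _ h => e.injective h
    have hcard := Finset.card_le_card_of_injOn (fun j => e j) hsub hinj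
    rw [Finset.card_range, Pi.card_Icc] at hcard
    have hIcc : (Finset.Icc (-(M:ℤ)) (M:ℤ)).card = 2*M+1 := by
      rw [Int.card_Icc]
      have : ((M:ℤ) + 1 - -(M:ℤ)) = ((2*M+1 : ℕ) : ℤ) := by push_cast; ring
      rw [this, Int.toNat_natCast]
    simp only [Finset.prod_const, Finset.card_univ, Fintype.card_fin] at hcard
    rw [hIcc] at hcard
    exact_mod_cast hcard
  have h2M : ((2*M+1 : ℕ) : ℝ) ≤ K * (R + 1) := by
    have hceil : (M : ℝ) ≤ c * R + 1 := (Nat.ceil_lt_add_one (by positivity)).le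
    push_cast
    nlinarith
  have hnv : (n : ℝ) ^ v ≤ K * (R + 1) := by
    have hKR : (0:ℝ) ≤ K * (R+1) := by positivity
    have h1 : (n:ℝ) ^ v ≤ ((K * (R+1)) ^ ((2*d : ℕ):ℝ)) ^ v := by
      refine Real.rpow_le_rpow (Nat.cast_nonneg n) ?_ (by positivity)
      calc (n:ℝ) ≤ ((2*M+1:ℕ):ℝ)^(2*d) := hcount
        _ ≤ (K*(R+1))^(2*d) := pow_le_pow_left₀ (Nat.cast_nonneg _) h2M _
        _ = (K*(R+1)) ^ ((2*d:ℕ):ℝ) := (Real.rpow_natCast _ _).symm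
    have h2 : ((2*d:ℕ):ℝ) * v = 1 := by
      rw [hv]; push_cast; field_simp
    rwa [← Real.rpow_mul hKR, h2, Real.rpow_one] at h1
  clear_value K u v ε' C' x T R M
  rcases le_or_gt (2*K) ((n:ℝ)^v) with hbig | hsmall
  · -- large n
    have hRlow : (n:ℝ)^v / (2*K) ≤ R := by
      rw [div_le_iff₀ (by positivity)]
      nlinarith [hnv, hbig, hK0, hR0, mul_pos hK0 (show (0:ℝ) < R + 1 by linarith)]
    have hTlow : ε' * (n:ℝ)^u ≤ ε * T := by
      have h1 : ((n:ℝ)^v / (2*K)) ^ (1/s : ℝ) ≤ T := by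
        calc ((n:ℝ)^v / (2*K)) ^ (1/s : ℝ) ≤ R ^ (1/s : ℝ) :=
              Real.rpow_le_rpow (by positivity) hRlow (by positivity)
          _ = T := by
              rw [hR, ← Real.rpow_mul hT0, mul_one_div_cancel hs.ne', Real.rpow_one]
      have h2 : ((n:ℝ)^v/(2*K))^(1/s:ℝ) = (n:ℝ)^u / (2*K)^(1/s:ℝ) := by
        rw [Real.div_rpow (by positivity) (by positivity),
          ← Real.rpow_mul (Nat.cast_nonneg n), ← huv]
      have h3 : ε' * (n:ℝ)^u = ε * ((n:ℝ)^u / (2*K)^(1/s:ℝ)) := by rw [hε']; ring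
      rw [h3]
      refine mul_le_mul_of_nonneg_left ?_ hε.le
      rw [← h2]; exact h1
    have hlog : ε' * (n:ℝ)^u ≤ Real.log (C / x) := by
      have hεT : ε * T = Real.log (C/x) := by rw [hT]; field_simp
      linarith
    have hexp : Real.exp (ε' * (n:ℝ)^u) ≤ C / x := by
      calc Real.exp (ε' * (n:ℝ)^u) ≤ Real.exp (Real.log (C/x)) := Real.exp_le_exp.mpr hlog
        _ = C / x := Real.exp_log (div_pos hC hx0)
    have h6 : x * Real.exp (ε' * (n:ℝ)^u) ≤ C := by
      have := mul_le_mul_of_nonneg_left hexp hx0.le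
      calc x * Real.exp (ε' * (n:ℝ)^u) ≤ x * (C / x) := this
        _ = C := by field_simp
    have h7 : x ≤ C * Real.exp (-(ε' * (n:ℝ)^u)) := by
      calc x = x * Real.exp (ε' * (n:ℝ)^u) * Real.exp (-(ε' * (n:ℝ)^u)) := by
            rw [mul_assoc, ← Real.exp_add]; simp
        _ ≤ C * Real.exp (-(ε' * (n:ℝ)^u)) :=
            mul_le_mul_of_nonneg_right h6 (Real.exp_pos _).le
    calc x ≤ C * Real.exp (-(ε' * (n:ℝ)^u)) := h7
      _ ≤ C' * Real.exp (-ε' * (n:ℝ)^u) := by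
          rw [neg_mul]
          exact mul_le_mul_of_nonneg_right hCC' (Real.exp_pos _).le
  · -- small n
    have hnu : (n:ℝ)^u ≤ (2*K)^(1/s:ℝ) := by
      rw [huv, Real.rpow_mul (Nat.cast_nonneg n)]
      exact Real.rpow_le_rpow (Real.rpow_nonneg (Nat.cast_nonneg n) _) hsmall.le (by positivity)
    calc x ≤ C := hxC
      _ ≤ C' * Real.exp (-ε' * (n:ℝ)^u) := by
          rw [hC', mul_assoc, ← Real.exp_add]
          have h8 : (0:ℝ) ≤ ε' * (2*K)^(1/s:ℝ) + -ε' * (n:ℝ)^u := by nlinarith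
          nlinarith [Real.one_le_exp h8]
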